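/- Let G be a recursively presented group ⟨X | R⟩ such that the set of shortlex conjugacy normal forms ConjSL(G,X) is a recursive subset of X*. Then G has solvable conjugacy problem. -/

import Mathlib

/-- The image in `G` of a word over the generating alphabet. -/
def wordProd {X G : Type*} [Group G] (f : X → G) (w : List X) : G :=
  (w.map f).prod

/-- The shortlex order on words over the ordered alphabet `Fin n`. -/
def ShortLexLE {n : ℕ} (w v : List (Fin n)) : Prop :=
  w.length < v.length ∨ (w.length = v.length ∧ (w = v ∨ List.Lex (· < ·) w v))

/-- `w` is the shortlex conjugacy normal form of its conjugacy class: it is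
shortlex-least among all words representing elements conjugate to `π(w)`. -/
def IsConjSLNormalForm {n : ℕ} {G : Type*} [Group G] (f : Fin n → G)
    (w : List (Fin n)) : Prop :=
  ∀ v : List (Fin n), IsConj (wordProd f v) (wordProd f w) → ShortLexLE w v

namespace CPAux

theorem wordProd_append {X G : Type*} [Group G] (f : X → G) (u v : List X) :
    wordProd f (u ++ v) = wordProd f u * wordProd f v := by
  simp [wordProd]

/-- The formal inverse of a word. -/
def iW {n : ℕ} (g : Fin n → Fin n) (y : List (Fin n)) : List (Fin n) :=
  y.reverse.map g

theorem wordProd_iW {n : ℕ} {G : Type*} [Group G] (f : Fin n → G) (g : Fin n → Fin n)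
    (hg : ∀ x, f (g x) = (f x)⁻¹) (w : List (Fin n)) :
    wordProd f (iW g w) = (wordProd f w)⁻¹ := by
  induction w with
  | nil => simp [wordProd, iW]
  | cons a t ih =>
    rw [iW, List.reverse_cons, List.map_append, wordProd_append]
    rw [iW] at ih
    rw [ih]
    simp [wordProd, hg, mul_inv_rev]

/-- The word whose triviality witnesses that `π w` is conjugate (by `π y`) to `π u`. -/
def cw {n : ℕ} (g : Fin n → Fin n) (y w u : List (Fin n)) : List (Fin n) :=
  y ++ (w ++ (iW g y ++ iW g u))

theorem prim_iW {n : ℕ} {γ : Type} [Primcodable γ] (g : Fin n → Fin n)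
    {s : γ → List (Fin n)} (hs : Primrec s) : Primrec fun x => iW g (s x) :=
  Primrec.list_map (Primrec.list_reverse.comp hs)
    (((Primrec.dom_finite g).comp Primrec.snd).to₂)

theorem prim_app {n : ℕ} {γ : Type} [Primcodable γ] {s t : γ → List (Fin n)}
    (hs : Primrec s) (ht : Primrec t) : Primrec fun x => s x ++ t x :=
  Primrec.list_append.comp hs ht

theorem prim_cw {n : ℕ} {γ : Type} [Primcodable γ] (g : Fin n → Fin n)
    {s t r : γ → List (Fin n)} (hs : Primrec s) (ht : Primrec t) (hr : Primrec r) :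
    Primrec fun x => cw g (s x) (t x) (r x) :=
  prim_app hs (prim_app ht (prim_app (prim_iW g hs) (prim_iW g hr)))

theorem exists_word {n : ℕ} {G : Type*} [Group G] (f : Fin n → G) (g : Fin n → Fin n)
    (hg : ∀ x, f (g x) = (f x)⁻¹) (hgen : Subgroup.closure (Set.range f) = ⊤) (a : G) :
    ∃ w : List (Fin n), wordProd f w = a := by
  have ha : a ∈ Subgroup.closure (Set.range f) := by rw [hgen]; trivial
  induction ha using Subgroup.closure_induction with
  | mem x hx =>
    obtain ⟨i, rfl⟩ := hx
    exact ⟨[i], by simp [wordProd]⟩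
  | one => exact ⟨[], by simp [wordProd]⟩
  | mul x y _ _ hx hy =>
    obtain ⟨u, rfl⟩ := hx
    obtain ⟨v, rfl⟩ := hy
    exact ⟨u ++ v, wordProd_append f u v⟩
  | inv x _ hx =>
    obtain ⟨u, rfl⟩ := hx
    exact ⟨iW g u, wordProd_iW f g hg u⟩

theorem sl_min {n : ℕ} (S : Set (List (Fin n))) (hS : S.Nonempty) :
    ∃ w ∈ S, ∀ v ∈ S, ShortLexLE w v := by
  classical
  obtain ⟨u, hu⟩ := hS
  have hP : ∃ m, ∃ w ∈ S, w.length = m := ⟨u.length, u, hu, rfl⟩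
  obtain ⟨w0, hw0S, hw0len⟩ := Nat.find_spec hP
  have hfin : {v | v ∈ S ∧ v.length = Nat.find hP}.Finite :=
    (List.finite_length_eq _ (Nat.find hP)).subset fun v hv => hv.2
  have hT : w0 ∈ hfin.toFinset := hfin.mem_toFinset.2 ⟨hw0S, hw0len⟩
  obtain ⟨hwS, hwlen⟩ : hfin.toFinset.min' ⟨w0, hT⟩ ∈ S ∧
      (hfin.toFinset.min' ⟨w0, hT⟩).length = Nat.find hP :=
    hfin.mem_toFinset.1 (hfin.toFinset.min'_mem _)
  refine ⟨hfin.toFinset.min' ⟨w0, hT⟩, hwS, fun v hv => ?_⟩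
  have hle : Nat.find hP ≤ v.length := Nat.find_min' hP ⟨v, hv, rfl⟩
  rcases lt_or_eq_of_le hle with h | h
  · exact Or.inl (by omega)
  · have hvT : v ∈ hfin.toFinset := hfin.mem_toFinset.2 ⟨hv, h.symm⟩
    have hwv : hfin.toFinset.min' ⟨w0, hT⟩ ≤ v := hfin.toFinset.min'_le v hvT
    rcases lt_or_eq_of_le hwv with h' | h'
    · exact Or.inr ⟨by omega, Or.inr h'⟩
    · exact Or.inr ⟨by omega, Or.inl h'⟩

theorem sl_antisymm {n : ℕ} {w v : List (Fin n)} (h1 : ShortLexLE w v) (h2 : ShortLexLE v w) :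
    w = v := by
  rcases h1 with h1 | ⟨hlen, h1⟩
  · rcases h2 with h2 | ⟨hlen, _⟩ <;> omega
  · rcases h1 with h1 | h1
    · exact h1
    · rcases h2 with h2 | ⟨_, h2⟩
      · omega
      · rcases h2 with h2 | h2
        · exact h2.symm
        · exact absurd h2 (asymm h1)

theorem exists_nf {n : ℕ} {G : Type*} [Group G] (f : Fin n → G) (u : List (Fin n)) :
    ∃ w : List (Fin n), IsConjSLNormalForm f w ∧ IsConj (wordProd f w) (wordProd f u) := by
  obtain ⟨w, hwS, hmin⟩ := sl_min {v | IsConj (wordProd f v) (wordProd f u)} ⟨u, IsConj.refl _⟩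
  exact ⟨w, fun v hv => hmin v (hv.trans hwS), hwS⟩

theorem conj_iff_word {G : Type*} [Group G] (c w u : G) :
    c * (w * (c⁻¹ * u⁻¹)) = 1 ↔ c * w * c⁻¹ = u := by
  constructor <;> intro h
  · calc c * w * c⁻¹ = (c * (w * (c⁻¹ * u⁻¹))) * u := by group
    _ = u := by rw [h]; group
  · calc c * (w * (c⁻¹ * u⁻¹)) = (c * w * c⁻¹) * u⁻¹ := by group
    _ = 1 := by rw [h]; group

theorem re_comp {α β : Type*} [Primcodable α] [Primcodable β] {p : β → Prop} {g : α → β}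
    (hp : REPred p) (hg : Computable g) : REPred fun a => p (g a) :=
  Partrec.comp hp hg

theorem re_and {α : Type*} [Primcodable α] {p q : α → Prop} (hp : REPred p) (hq : REPred q) :
    REPred fun a => p a ∧ q a := by
  have H : Partrec fun a =>
      (Part.assert (p a) fun _ => Part.some ()).bind fun _ =>
        Part.assert (q a) fun _ => Part.some () :=
    Partrec.bind hp (re_comp hq Computable.fst)
  refine H.dom_re.of_eq fun a => ?_
  rw [Part.bind_dom]
  constructor
  · rintro ⟨⟨hpa, -⟩, hqa, -⟩
    exact ⟨hpa, hqa⟩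
  · rintro ⟨hpa, hqa⟩
    exact ⟨⟨hpa, trivial⟩, hqa, trivial⟩

set_option maxHeartbeats 1000000 in
theorem re_exists {α β : Type*} [Primcodable α] [Primcodable β] {p : α → β → Prop}
    (hp : REPred fun x : α × β => p x.1 x.2) : REPred fun a => ∃ b, p a b := by
  obtain ⟨c, hc⟩ := Nat.Partrec.Code.exists_code.1 hp
  have heval : Primrec fun km : ℕ × ℕ => Nat.Partrec.Code.evaln km.1 c km.2 :=
    Nat.Partrec.Code.primrec_evaln.comp
      ((Primrec.fst.pair (Primrec.const c)).pair Primrec.snd)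
  have hf : Primrec fun q : (α × ℕ) × β =>
      Nat.Partrec.Code.evaln (Nat.unpair q.1.2).1 c (Encodable.encode (q.1.1, q.2)) :=
    heval.comp ((Primrec.fst.comp
        (Primrec.unpair.comp (Primrec.snd.comp Primrec.fst))).pair
      (Primrec.encode.comp ((Primrec.fst.comp Primrec.fst).pair Primrec.snd)))
  have hG : Primrec fun x : α × ℕ =>
      ((Encodable.decode (Nat.unpair x.2).2 : Option β).bind fun b =>
        (Nat.Partrec.Code.evaln (Nat.unpair x.2).1 c
          (Encodable.encode (x.1, b))).map fun _ => ()) :=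
    Primrec.option_bind
      (Primrec.decode.comp (Primrec.snd.comp (Primrec.unpair.comp Primrec.snd)))
      ((Primrec.option_map hf ((Primrec.const ()).comp Primrec.fst).to₂))
  have H := Partrec.rfindOpt hG.to_comp.to₂
  refine H.dom_re.of_eq fun a => ?_
  rw [Nat.rfindOpt_dom]
  constructor
  · rintro ⟨k, x, hx⟩
    simp only [Option.mem_def, Option.bind_eq_some_iff, Option.map_eq_some_iff] at hx
    obtain ⟨b, hb, y, hy, -⟩ := hx
    refine ⟨b, ?_⟩
    have hmem : y ∈ Nat.Partrec.Code.eval c (Encodable.encode (a, b)) :=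
      Nat.Partrec.Code.evaln_complete.2 ⟨_, hy⟩
    rw [hc] at hmem
    simp only [Part.mem_bind_iff, Encodable.encodek, Part.coe_some, Part.mem_some_iff,
      Part.mem_map_iff, Part.mem_assert_iff] at hmem
    obtain ⟨x', rfl, u, ⟨h', -⟩, -⟩ := hmem
    exact h'
  · rintro ⟨b, hb⟩
    have hdom : (Nat.Partrec.Code.eval c (Encodable.encode (a, b))).Dom := by
      rw [hc, Part.dom_iff_mem]
      refine ⟨Encodable.encode (), ?_⟩
      simp only [Part.mem_bind_iff, Encodable.encodek, Part.coe_some, Part.mem_some_iff,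
        Part.mem_map_iff, Part.mem_assert_iff]
      exact ⟨(a, b), rfl, (), ⟨hb, trivial⟩, trivial⟩
    obtain ⟨x, hx⟩ := Part.dom_iff_mem.1 hdom
    obtain ⟨k, hk⟩ := Nat.Partrec.Code.evaln_complete.1 hx
    refine ⟨Nat.pair k (Encodable.encode b), (), ?_⟩
    simp only [Option.mem_def, Option.bind_eq_some_iff, Nat.unpair_pair, Encodable.encodek,
      Option.map_eq_some_iff]
    exact ⟨b, rfl, x, hk, trivial⟩

end CPAux

open CPAux in
/-- A recursively presented group whose set of shortlex conjugacy normal forms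
is recursive has solvable conjugacy problem. -/
theorem conjugacyProblem_solvable_of_conjSL_recursive {n : ℕ} {G : Type*} [Group G]
    (f : Fin n → G) (hinv : ∀ x : Fin n, ∃ y : Fin n, f y = (f x)⁻¹)
    (hgen : Subgroup.closure (Set.range f) = ⊤)
    (hre : REPred fun w : List (Fin n) => wordProd f w = 1)
    (hrec : ComputablePred fun w : List (Fin n) => IsConjSLNormalForm f w) :
    ComputablePred fun p : List (Fin n) × List (Fin n) =>
      IsConj (wordProd f p.1) (wordProd f p.2) := by
  classical
  obtain ⟨g, hg⟩ : ∃ g : Fin n → Fin n, ∀ x, f (g x) = (f x)⁻¹ := by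
    choose g hg using hinv; exact ⟨g, hg⟩
  have hcw1 : ∀ y w u : List (Fin n), wordProd f (cw g y w u) = 1 ↔
      wordProd f y * wordProd f w * (wordProd f y)⁻¹ = wordProd f u := by
    intro y w u
    rw [cw]
    simp only [wordProd_append, wordProd_iW f g hg]
    exact conj_iff_word _ _ _
  have key : ∀ w u : List (Fin n), IsConj (wordProd f w) (wordProd f u) ↔
      ∃ y : List (Fin n), wordProd f (cw g y w u) = 1 := by
    intro w u
    rw [isConj_iff]
    constructor
    · rintro ⟨c, hc⟩
      obtain ⟨y, rfl⟩ := exists_word f g hg hgen c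
      exact ⟨y, (hcw1 y w u).2 hc⟩
    · rintro ⟨y, hy⟩
      exact ⟨wordProd f y, (hcw1 y w u).1 hy⟩
  rw [ComputablePred.computable_iff_re_compl_re']
  constructor
  · -- conjugacy is r.e.
    have hq : REPred fun x : (List (Fin n) × List (Fin n)) × List (Fin n) =>
        wordProd f (cw g x.2 x.1.1 x.1.2) = 1 :=
      re_comp hre (prim_cw g Primrec.snd (Primrec.fst.comp Primrec.fst)
        (Primrec.snd.comp Primrec.fst)).to_comp
    exact (re_exists hq).of_eq fun x => (key x.1 x.2).symm
  · -- non-conjugacy is r.e.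
    have hPre : REPred fun z : (List (Fin n) × List (Fin n)) ×
        ((List (Fin n) × List (Fin n)) × (List (Fin n) × List (Fin n))) =>
        IsConjSLNormalForm f z.2.1.1 ∧ (IsConjSLNormalForm f z.2.1.2 ∧ (z.2.1.1 ≠ z.2.1.2 ∧
          (wordProd f (cw g z.2.2.1 z.2.1.1 z.1.1) = 1 ∧
            wordProd f (cw g z.2.2.2 z.2.1.2 z.1.2) = 1))) := by
      have h1 : REPred fun z : (List (Fin n) × List (Fin n)) ×
          ((List (Fin n) × List (Fin n)) × (List (Fin n) × List (Fin n))) =>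
          IsConjSLNormalForm f z.2.1.1 := re_comp hrec.to_re
        (Computable.fst.comp (Computable.fst.comp Computable.snd))
      have h2 : REPred fun z : (List (Fin n) × List (Fin n)) ×
          ((List (Fin n) × List (Fin n)) × (List (Fin n) × List (Fin n))) =>
          IsConjSLNormalForm f z.2.1.2 := re_comp hrec.to_re
        (Computable.snd.comp (Computable.fst.comp Computable.snd))
      have h3 : REPred fun z : (List (Fin n) × List (Fin n)) ×
          ((List (Fin n) × List (Fin n)) × (List (Fin n) × List (Fin n))) =>
          z.2.1.1 ≠ z.2.1.2 := by
        have heq : ComputablePred fun z : (List (Fin n) × List (Fin n)) ×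
            ((List (Fin n) × List (Fin n)) × (List (Fin n) × List (Fin n))) =>
            z.2.1.1 = z.2.1.2 :=
          ⟨fun _ => inferInstance,
            (Primrec.eq.comp
              (Primrec.fst.comp (Primrec.fst.comp Primrec.snd))
              (Primrec.snd.comp (Primrec.fst.comp Primrec.snd))).decide.to_comp⟩
        exact heq.not.to_re
      have h4 : REPred fun z : (List (Fin n) × List (Fin n)) ×
          ((List (Fin n) × List (Fin n)) × (List (Fin n) × List (Fin n))) =>
          wordProd f (cw g z.2.2.1 z.2.1.1 z.1.1) = 1 := re_comp hre (prim_cw g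
        (Primrec.fst.comp (Primrec.snd.comp Primrec.snd))
        (Primrec.fst.comp (Primrec.fst.comp Primrec.snd))
        (Primrec.fst.comp Primrec.fst)).to_comp
      have h5 : REPred fun z : (List (Fin n) × List (Fin n)) ×
          ((List (Fin n) × List (Fin n)) × (List (Fin n) × List (Fin n))) =>
          wordProd f (cw g z.2.2.2 z.2.1.2 z.1.2) = 1 := re_comp hre (prim_cw g
        (Primrec.snd.comp (Primrec.snd.comp Primrec.snd))
        (Primrec.snd.comp (Primrec.fst.comp Primrec.snd))
        (Primrec.snd.comp Primrec.fst)).to_comp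
      exact re_and h1 (re_and h2 (re_and h3 (re_and h4 h5)))
    refine (re_exists (p := fun (x : List (Fin n) × List (Fin n))
        (b : (List (Fin n) × List (Fin n)) × (List (Fin n) × List (Fin n))) =>
        IsConjSLNormalForm f b.1.1 ∧ (IsConjSLNormalForm f b.1.2 ∧ (b.1.1 ≠ b.1.2 ∧
          (wordProd f (cw g b.2.1 b.1.1 x.1) = 1 ∧
            wordProd f (cw g b.2.2 b.1.2 x.2) = 1)))) hPre).of_eq fun x => ?_
    constructor
    · rintro ⟨⟨⟨w1, w2⟩, ⟨y1, y2⟩⟩, hw1nf, hw2nf, hne, hy1, hy2⟩ hconj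
      apply hne
      have hw1c : IsConj (wordProd f w1) (wordProd f x.1) := (key w1 x.1).2 ⟨y1, hy1⟩
      have hw2c : IsConj (wordProd f w2) (wordProd f x.2) := (key w2 x.2).2 ⟨y2, hy2⟩
      have h12 : IsConj (wordProd f w1) (wordProd f w2) :=
        (hw1c.trans hconj).trans hw2c.symm
      exact sl_antisymm (hw1nf w2 h12.symm) (hw2nf w1 h12)
    · intro hnc
      obtain ⟨w1, hw1nf, hw1c⟩ := exists_nf f x.1
      obtain ⟨w2, hw2nf, hw2c⟩ := exists_nf f x.2
      obtain ⟨y1, hy1⟩ := (key w1 x.1).1 hw1c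
      obtain ⟨y2, hy2⟩ := (key w2 x.2).1 hw2c
      refine ⟨((w1, w2), (y1, y2)), hw1nf, hw2nf, ?_, hy1, hy2⟩
      intro hww
      have hww' : w1 = w2 := hww
      subst hww'
      exact hnc (hw1c.symm.trans hw2c)
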